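/- Let v := e_0 − (conj(α)·β/conj(β))·e_1 (a spanning vector of ker T*_{α,β} = H ⊖ T_{α,β}H), and let u be the unique real root of the cubic z³ + 3z² + 2z − 1. Then the closed linear span of {T_{α,β}^n v : n ≥ 0} equals all of H if and only if |α|² ≤ 1/(u+1). In other words, H = [H ⊖ T_{α,β}H]_{T_{α,β}} if and only if |α|² ≤ 1/(u+1). -/

import Mathlib

open scoped ComplexConjugate

noncomputable section

/-- The Hilbert space `H = ℓ²(ℕ, ℂ)`. -/
abbrev H : Type := lp (fun _ : ℕ => ℂ) 2

/-- The standard orthonormal basis vectors of `ℓ²(ℕ, ℂ)`. -/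
noncomputable def e (n : ℕ) : H := lp.single 2 n (1 : ℂ)

/-- Auxiliary sequence for the orthogonality recurrence. -/
def Sseq (A B : ℂ) (w : ℕ → ℂ) (n : ℕ) : ℂ :=
  A ^ n * w 0 + ∑ j ∈ Finset.range n, A ^ (n - 1 - j) * B * w (j + 1)

lemma Sseq_succ (A B : ℂ) (w : ℕ → ℂ) (n : ℕ) :
    Sseq A B w (n + 1) = A * Sseq A B w n + B * w (n + 1) := by
  unfold Sseq
  rw [Finset.sum_range_succ]
  have h1 : ∀ j ∈ Finset.range n, A ^ (n + 1 - 1 - j) * B * w (j + 1)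
      = A * (A ^ (n - 1 - j) * B * w (j + 1)) := by
    intro j hj
    rw [Finset.mem_range] at hj
    have h : n + 1 - 1 - j = (n - 1 - j) + 1 := by omega
    rw [h, pow_succ]; ring
  rw [Finset.sum_congr rfl h1, ← Finset.mul_sum]
  have h0 : n + 1 - 1 - n = 0 := by omega
  rw [h0]
  ring

lemma Tpow_v (α β : ℂ) (T : H →L[ℂ] H)
    (hT0 : T (e 0) = (α * conj β) • e 0 + β • e 1)
    (hTn : ∀ n : ℕ, 1 ≤ n → T (e n) = e (n + 1))
    (v : H) (hv : v = e 0 - (conj α * β / conj β) • e 1) (n : ℕ) :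
    (T ^ n) v = (α * conj β) ^ n • e 0
      + (∑ j ∈ Finset.range n, ((α * conj β) ^ (n - 1 - j) * β) • e (j + 1))
      - (conj α * β / conj β) • e (n + 1) := by
  induction n with
  | zero => simp [hv]
  | succ n ih =>
    have hstep : (T ^ (n+1)) v = T ((T ^ n) v) := by
      rw [pow_succ', ContinuousLinearMap.mul_apply]
    rw [hstep, ih]
    rw [map_sub, map_add, map_smul, map_smul, map_sum]
    simp only [map_smul]
    rw [hT0, hTn (n+1) (by omega)]
    have hsum : ∀ j ∈ Finset.range n, ((α * conj β) ^ (n - 1 - j) * β) • T (e (j + 1))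
        = ((α * conj β) ^ (n - 1 - j) * β) • e (j + 2) := by
      intro j _; rw [hTn (j+1) (by omega)]
    rw [Finset.sum_congr rfl hsum]
    rw [Finset.sum_range_succ' (fun j => ((α * conj β) ^ (n + 1 - 1 - j) * β) • e (j + 1)) n]
    have h2 : ∀ j ∈ Finset.range n, ((α * conj β) ^ (n + 1 - 1 - (j+1)) * β) • e (j + 1 + 1)
        = ((α * conj β) ^ (n - 1 - j) * β) • e (j + 2) := by
      intro j _
      have h : n + 1 - 1 - (j + 1) = n - 1 - j := by omega
      rw [h]
    rw [Finset.sum_congr rfl h2]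
    simp only [Nat.add_sub_cancel, Nat.sub_zero, smul_add, smul_smul, pow_succ]
    abel

lemma inner_e (k : ℕ) (w : H) : (inner ℂ (e k) w : ℂ) = w k := by
  unfold e
  rw [lp.inner_single_left]
  simp [RCLike.inner_apply]

/-- The inner product of `Tⁿ v` with an arbitrary vector, in coordinates. -/
lemma inner_Tpow (α β : ℂ) (T : H →L[ℂ] H)
    (hT0 : T (e 0) = (α * conj β) • e 0 + β • e 1)
    (hTn : ∀ n : ℕ, 1 ≤ n → T (e n) = e (n + 1))
    (v : H) (hv : v = e 0 - (conj α * β / conj β) • e 1) (n : ℕ) (w : H) :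
    (inner ℂ ((T ^ n) v) w : ℂ)
      = Sseq (conj α * β) (conj β) (⇑w) n - (α * conj β / β) * w (n + 1) := by
  rw [Tpow_v α β T hT0 hTn v hv n]
  rw [inner_sub_left, inner_add_left, inner_smul_left, inner_smul_left, sum_inner]
  simp only [inner_smul_left, inner_e, map_pow, map_mul, map_div₀, Complex.conj_conj]
  rfl

lemma root_pos (u : ℝ) (hu : u ^ 3 + 3 * u ^ 2 + 2 * u - 1 = 0) : 0 < u := by
  nlinarith [sq_nonneg u, sq_nonneg (u+1), sq_nonneg (u+2), sq_nonneg (u^2+2*u),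
    sq_nonneg (3*u^2+6*u+2)]

lemma threshold_iff (u a2 : ℝ) (hu : u ^ 3 + 3 * u ^ 2 + 2 * u - 1 = 0)
    (hupos : 0 < u) (h0 : 0 < a2) : a2 ≤ 1 / (u + 1) ↔ a2 ^ 3 + a2 ^ 2 ≤ 1 := by
  have h1 : (0:ℝ) < u + 1 := by linarith
  set t := 1 / (u + 1) with htdef
  have htpos : 0 < t := by positivity
  have ht : t ^ 3 + t ^ 2 = 1 := by
    rw [htdef]; field_simp; ring_nf; nlinarith [hu]
  have hpos : 0 < a2 ^ 2 + a2 * t + t ^ 2 + a2 + t := by positivity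
  constructor
  · intro h
    nlinarith [mul_nonpos_of_nonpos_of_nonneg (show a2 - t ≤ 0 by linarith) hpos.le]
  · intro h
    by_contra hc
    push_neg at hc
    nlinarith [mul_pos (show 0 < a2 - t by linarith) hpos]

lemma absq_iff (a b r : ℝ) (ha : 0 < a) (hb : 0 < b) (hab : a ^ 2 + b ^ 2 = 1)
    (hr : r * a = b * (a ^ 2 + 1)) (hrn : 0 ≤ r) :
    1 ≤ r ↔ (a ^ 2) ^ 3 + (a ^ 2) ^ 2 ≤ 1 := by
  constructor
  · intro h
    have h2 : a ≤ b * (a ^ 2 + 1) := by nlinarith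
    nlinarith [sq_nonneg (b * (a ^ 2 + 1) - a), sq_nonneg a, sq_nonneg b]
  · intro h
    have h2 : a ^ 2 ≤ b ^ 2 * (a ^ 2 + 1) ^ 2 := by nlinarith
    have h3 : a ≤ b * (a ^ 2 + 1) := by
      by_contra hc
      push_neg at hc
      nlinarith [mul_pos (sub_pos.mpr hc) (show 0 < a + b * (a ^ 2 + 1) by positivity)]
    nlinarith

set_option maxHeartbeats 1600000 in
/-- The kernel vector `v = e 0 − (conj α · β / conj β) • e 1` of `T*` generates `H`
iff `|α|² ≤ 1/(u+1)`, where `u` is the unique real root of `z³ + 3z² + 2z − 1`. -/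
theorem full_space_wandering_subspace_property (α β : ℂ) (hα : α ≠ 0) (hβ : β ≠ 0)
    (hnorm : ‖α‖ ^ 2 + ‖β‖ ^ 2 = 1)
    (T : H →L[ℂ] H)
    (hT0 : T (e 0) = (α * conj β) • e 0 + β • e 1)
    (hTn : ∀ n : ℕ, 1 ≤ n → T (e n) = e (n + 1))
    (v : H) (hv : v = e 0 - (conj α * β / conj β) • e 1)
    (u : ℝ) (hu : u ^ 3 + 3 * u ^ 2 + 2 * u - 1 = 0)
    (huniq : ∀ y : ℝ, y ^ 3 + 3 * y ^ 2 + 2 * y - 1 = 0 → y = u) :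
    (Submodule.span ℂ (Set.range fun n : ℕ => (T ^ n) v)).topologicalClosure = ⊤ ↔
      ‖α‖ ^ 2 ≤ 1 / (u + 1) := by
  classical
  set a : ℝ := ‖α‖ with hadef
  set b : ℝ := ‖β‖ with hbdef
  have hapos : 0 < a := norm_pos_iff.mpr hα
  have hbpos : 0 < b := norm_pos_iff.mpr hβ
  set A : ℂ := conj α * β with hAdef
  set B : ℂ := conj β with hBdef
  set D : ℂ := α * conj β / β with hDdef
  set q : ℂ := conj α * β + β / α with hqdef
  have hconjα : conj α ≠ 0 := by simpa using hα
  have hconjβ : conj β ≠ 0 := by simpa using hβ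
  have hD : D ≠ 0 := by
    rw [hDdef]; exact div_ne_zero (mul_ne_zero hα hconjβ) hβ
  have hqD : A * D + B = q * D := by
    rw [hAdef, hBdef, hDdef, hqdef]
    field_simp
  have hDabs : ‖D‖ = a := by
    rw [hDdef, norm_div, norm_mul, Complex.norm_conj]
    field_simp [hadef, hbdef]
    exact hadef.symm
  have hca : conj α * α = ((a ^ 2 : ℝ) : ℂ) := by
    rw [mul_comm, Complex.mul_conj, Complex.normSq_eq_norm_sq]
  have habsq : ‖q‖ * a = b * (a ^ 2 + 1) := by
    have hqα : q * α = β * ((a ^ 2 + 1 : ℝ) : ℂ) := by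
      have h1 : q * α = conj α * α * β + β := by
        rw [hqdef]; field_simp
      rw [h1, hca]
      push_cast
      ring
    have := congrArg (‖·‖) hqα
    rw [norm_mul, norm_mul] at this
    rw [hadef, hbdef]
    rw [this]
    rw [Complex.norm_real, Real.norm_of_nonneg (by positivity)]
  have hupos : 0 < u := root_pos u hu
  have hiff2 : a ^ 2 ≤ 1 / (u + 1) ↔ (a ^ 2) ^ 3 + (a ^ 2) ^ 2 ≤ 1 :=
    threshold_iff u (a ^ 2) hu hupos (by positivity)
  have hq1 : 1 ≤ ‖q‖ ↔ (a ^ 2) ^ 3 + (a ^ 2) ^ 2 ≤ 1 :=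
    absq_iff a b (‖q‖) hapos hbpos hnorm habsq (norm_nonneg q)
  rw [hiff2, ← hq1]
  -- inner product formula for this setting
  have hinner : ∀ (n : ℕ) (w : H),
      (inner ℂ ((T ^ n) v) w : ℂ) = Sseq A B (⇑w) n - D * w (n + 1) :=
    fun n w => inner_Tpow α β T hT0 hTn v hv n w
  constructor
  · -- closure = ⊤ ⇒ 1 ≤ |q| ; by contraposition, build an orthogonal vector
    intro hcl
    by_contra hlt
    push_neg at hlt
    set g : ℕ → ℂ := fun n => if n = 0 then D else q ^ (n - 1) with hgdef
    have hmem : Memℓp g 2 := by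
      apply memℓp_gen
      have h2 : (2 : ENNReal).toReal = 2 := by norm_num
      simp_rw [h2]
      rw [← summable_nat_add_iff 1]
      have heq : ∀ n : ℕ, ‖g (n + 1)‖ ^ (2:ℝ) = (‖q‖ ^ 2) ^ n := by
        intro n
        have : g (n + 1) = q ^ n := by simp [hgdef]
        rw [this]
        rw [Real.rpow_two]
        rw [norm_pow]
        ring
      simp_rw [heq]
      apply summable_geometric_of_lt_one (by positivity)
      nlinarith [norm_nonneg q]
    set w : H := ⟨g, hmem⟩ with hwdef
    have hwapp : ∀ n, w n = g n := fun n => rfl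
    have hSn : ∀ n, Sseq A B (⇑w) n = q ^ n * D := by
      intro n
      induction n with
      | zero => simp [Sseq, hwapp, hgdef]
      | succ n ih =>
        rw [Sseq_succ, ih, hwapp]
        have hg : g (n + 1) = q ^ n := by simp [hgdef]
        rw [hg]
        calc A * (q ^ n * D) + B * q ^ n = q ^ n * (A * D + B) := by ring
          _ = q ^ n * (q * D) := by rw [hqD]
          _ = q ^ (n + 1) * D := by ring
    have horth : ∀ n : ℕ, (inner ℂ ((T ^ n) v) w : ℂ) = 0 := by
      intro n
      rw [hinner n w, hSn n, hwapp]
      have hg : g (n + 1) = q ^ n := by simp [hgdef]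
      rw [hg]
      ring
    have hwo : w ∈ (Submodule.span ℂ (Set.range fun n : ℕ => (T ^ n) v))ᗮ := by
      rw [Submodule.mem_orthogonal]
      intro x hx
      induction hx using Submodule.span_induction with
      | mem x hx =>
        obtain ⟨n, rfl⟩ := hx
        exact horth n
      | zero => simp
      | add x y _ _ hx hy => rw [inner_add_left, hx, hy, add_zero]
      | smul c x _ hx => rw [inner_smul_left, hx, mul_zero]
    rw [Submodule.topologicalClosure_eq_top_iff] at hcl
    rw [hcl, Submodule.mem_bot] at hwo
    have : w 0 = 0 := by rw [hwo]; rfl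
    rw [hwapp 0] at this
    simp [hgdef] at this
    exact hD this
  · -- 1 ≤ |q| ⇒ closure = ⊤
    intro hq
    rw [Submodule.topologicalClosure_eq_top_iff]
    rw [Submodule.eq_bot_iff]
    intro w hw
    rw [Submodule.mem_orthogonal] at hw
    have horth : ∀ n : ℕ, (inner ℂ ((T ^ n) v) w : ℂ) = 0 := by
      intro n
      exact hw _ (Submodule.subset_span ⟨n, rfl⟩)
    have hkey : ∀ n : ℕ, D * w (n + 1) = Sseq A B (⇑w) n := by
      intro n
      have := horth n
      rw [hinner n w] at this
      linear_combination -this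
    have hSn : ∀ n, Sseq A B (⇑w) n = q ^ n * w 0 := by
      intro n
      induction n with
      | zero => simp [Sseq]
      | succ n ih =>
        have h1 : D * Sseq A B (⇑w) (n + 1) = D * (q ^ (n + 1) * w 0) := by
          rw [Sseq_succ]
          calc D * (A * Sseq A B (⇑w) n + B * w (n + 1))
              = A * D * Sseq A B (⇑w) n + B * (D * w (n + 1)) := by ring
            _ = A * D * Sseq A B (⇑w) n + B * Sseq A B (⇑w) n := by rw [hkey n]
            _ = (A * D + B) * Sseq A B (⇑w) n := by ring
            _ = q * D * Sseq A B (⇑w) n := by rw [hqD]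
            _ = D * (q ^ (n + 1) * w 0) := by rw [ih]; ring
        exact mul_left_cancel₀ hD h1
    have hnormeq : ∀ n : ℕ, a * ‖w (n + 1)‖
        = ‖q‖ ^ n * ‖w 0‖ := by
      intro n
      have h1 : D * w (n + 1) = q ^ n * w 0 := by rw [hkey n, hSn n]
      have h2 := congrArg (‖·‖) h1
      rw [norm_mul, norm_mul, norm_pow, hDabs] at h2
      exact h2
    have hw0 : w 0 = 0 := by
      by_contra h0
      have hc : 0 < ‖w 0‖ := by
        simpa [norm_pos_iff] using h0
      have hsum := (lp.memℓp w).summable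
        (by norm_num : 0 < (2 : ENNReal).toReal)
      have htend := hsum.tendsto_atTop_zero
      have htend2 := htend.comp (Filter.tendsto_add_atTop_nat 1)
      have hlb : ∀ n : ℕ, (‖w 0‖ / a) ^ (2:ℕ)
          ≤ ((fun i => ‖w i‖ ^ (2 : ENNReal).toReal) ∘ (fun n => n + 1)) n := by
        intro n
        have h3 : ‖w 0‖ / a ≤ ‖w (n + 1)‖ := by
          have h4 := hnormeq n
          have h5 : 1 ≤ ‖q‖ ^ n := one_le_pow₀ hq
          rw [div_le_iff₀ hapos]
          nlinarith [hc.le, norm_nonneg (w (n + 1))]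
        have h6 : (2 : ENNReal).toReal = ((2:ℕ):ℝ) := by norm_num
        simp only [Function.comp_apply, h6, Real.rpow_natCast]
        exact pow_le_pow_left₀ (by positivity) h3 2
      have := ge_of_tendsto' htend2 hlb
      have hpos : 0 < (‖w 0‖ / a) ^ (2:ℕ) := by positivity
      linarith
    have hwn : ∀ n : ℕ, w n = 0 := by
      intro n
      cases n with
      | zero => exact hw0
      | succ n =>
        have h1 : D * w (n + 1) = 0 := by
          rw [hkey n, hSn n, hw0, mul_zero]
        exact (mul_eq_zero.mp h1).resolve_left hD
    apply lp.ext
    funext n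
    simpa using hwn n

end
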